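/- arXiv:2503.22826 — 7 statements merged into one kernel-verified Lean document; each statement's English description precedes it below -/
import Mathlib

section
/- Weak duality holds between the primal and dual subproblems: for every (d, z) ∈ ℝ^n × ℝ with ‖d‖_∞ ≤ δ and b_j + g_jᵀd ≤ z for all j ∈ {1,…,m}, and every (ω, γ) ∈ ℝ^m × ℝ^n with 𝟙ᵀω = 1 and ω ≥ 0, one has −(1/2)(Gω + γ)ᵀW(Gω + γ) + bᵀω − δ‖γ‖₁ ≤ z + (1/2)dᵀHd. -/
open Matrix

/-- weak duality between the primal subproblem
`min z + (1/2)dᵀHd  s.t. ‖d‖_∞ ≤ δ, b_j + g_jᵀd ≤ z` and the dual subproblem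
`max −(1/2)(Gω + γ)ᵀW(Gω + γ) + bᵀω − δ‖γ‖₁  s.t. 𝟙ᵀω = 1, ω ≥ 0`. -/
theorem stmt3 (n m : ℕ) [NeZero n] [NeZero m]
    (G : Matrix (Fin n) (Fin m) ℝ) (b : Fin m → ℝ)
    (H W : Matrix (Fin n) (Fin n) ℝ) (hH : H.PosDef) (hW : W = H⁻¹)
    (δ : ℝ) (hδ : 0 < δ)
    (d : Fin n → ℝ) (z : ℝ)
    (hd : ∀ i, |d i| ≤ δ) (hdz : ∀ j, b j + (fun i => G i j) ⬝ᵥ d ≤ z)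
    (ω : Fin m → ℝ) (γ : Fin n → ℝ)
    (hω1 : ∑ j, ω j = 1) (hω0 : ∀ j, 0 ≤ ω j) :
    -(1 / 2) * ((G *ᵥ ω + γ) ⬝ᵥ W *ᵥ (G *ᵥ ω + γ)) + b ⬝ᵥ ω - δ * ∑ i, |γ i|
      ≤ z + (1 / 2) * (d ⬝ᵥ H *ᵥ d) := by

  have hHdet : IsUnit H.det := isUnit_iff_ne_zero.2 hH.det_pos.ne'
  have hHW : H * W = 1 := by rw [hW]; exact Matrix.mul_nonsing_inv H hHdet
  set v := G *ᵥ ω + γ with hv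
  set u := W *ᵥ v with hu
  have huv : H *ᵥ u = v := by
    rw [hu, Matrix.mulVec_mulVec, hHW, Matrix.one_mulVec]
  have hsym : ∀ x y : Fin n → ℝ, x ⬝ᵥ H *ᵥ y = y ⬝ᵥ H *ᵥ x := by
    intro x y
    rw [Matrix.dotProduct_mulVec, ← Matrix.mulVec_transpose]
    have : Hᵀ = H := by
      have := hH.isHermitian
      exact Matrix.IsSymm.eq (by simpa [Matrix.conjTranspose_eq_transpose_of_trivial] using this)
    rw [this, dotProduct_comm]
  have key : 0 ≤ (d + u) ⬝ᵥ H *ᵥ (d + u) := by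
    have := hH.posSemidef.dotProduct_mulVec_nonneg (d + u)
    simpa using this
  have hexp : (d + u) ⬝ᵥ H *ᵥ (d + u)
      = d ⬝ᵥ H *ᵥ d + 2 * (d ⬝ᵥ v) + v ⬝ᵥ W *ᵥ v := by
    rw [Matrix.mulVec_add, dotProduct_add, add_dotProduct,
      add_dotProduct, huv]
    have h1 : u ⬝ᵥ H *ᵥ d = d ⬝ᵥ v := by rw [hsym, huv]
    have h2 : d ⬝ᵥ v = v ⬝ᵥ d := dotProduct_comm d v
    have h3 : u ⬝ᵥ v = v ⬝ᵥ W *ᵥ v := by rw [hu, dotProduct_comm]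
    rw [h1, h3]; ring
  have hkey2 : -(1/2) * (v ⬝ᵥ W *ᵥ v) ≤ (1/2) * (d ⬝ᵥ H *ᵥ d) + d ⬝ᵥ v := by
    nlinarith [key, hexp]
  have hdvsplit : d ⬝ᵥ v = d ⬝ᵥ (G *ᵥ ω) + d ⬝ᵥ γ := by
    rw [hv, dotProduct_add]
  have hdG : d ⬝ᵥ (G *ᵥ ω) = ∑ j, ω j * ((fun i => G i j) ⬝ᵥ d) := by
    simp only [dotProduct, Matrix.mulVec, Finset.mul_sum]
    rw [Finset.sum_comm]
    exact Finset.sum_congr rfl fun j _ => Finset.sum_congr rfl fun i _ => by ring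
  have hbz : b ⬝ᵥ ω + d ⬝ᵥ (G *ᵥ ω) ≤ z := by
    rw [hdG]
    have : b ⬝ᵥ ω + ∑ j, ω j * ((fun i => G i j) ⬝ᵥ d)
        = ∑ j, ω j * (b j + (fun i => G i j) ⬝ᵥ d) := by
      simp only [dotProduct, Finset.mul_sum]
      rw [← Finset.sum_add_distrib]
      exact Finset.sum_congr rfl fun j _ => by rw [mul_add, Finset.mul_sum, mul_comm (ω j) (b j)]
    rw [this]
    calc ∑ j, ω j * (b j + (fun i => G i j) ⬝ᵥ d) ≤ ∑ j, ω j * z :=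
          Finset.sum_le_sum fun j _ => mul_le_mul_of_nonneg_left (hdz j) (hω0 j)
      _ = z := by rw [← Finset.sum_mul, hω1, one_mul]
  have hdγ : d ⬝ᵥ γ ≤ δ * ∑ i, |γ i| := by
    rw [Finset.mul_sum]
    refine Finset.sum_le_sum fun i _ => ?_
    calc d i * γ i ≤ |d i * γ i| := le_abs_self _
      _ = |d i| * |γ i| := abs_mul _ _
      _ ≤ δ * |γ i| := mul_le_mul_of_nonneg_right (hd i) (abs_nonneg _)
  linarith [hkey2, hbz, hdγ, hdvsplit]
end

section
/- Strong duality and primal recovery hold: if (ω*, γ*) is an optimal solution of the dual subproblem, then the pair (d*, z*) with d* = −W(Gω* + γ*) and z* = max_{j ∈ {1,…,m}} (b_j + g_jᵀd*) is an optimal solution of the primal subproblem, and the optimal value of the primal subproblem equals the optimal value of the dual subproblem. -/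
open Matrix

/-- Objective of the dual subproblem. -/
noncomputable def dualObj (n m : ℕ) (G : Matrix (Fin n) (Fin m) ℝ) (b : Fin m → ℝ)
    (W : Matrix (Fin n) (Fin n) ℝ) (δ : ℝ) (ω : Fin m → ℝ) (γ : Fin n → ℝ) : ℝ :=
  -(1 / 2) * ((G *ᵥ ω + γ) ⬝ᵥ W *ᵥ (G *ᵥ ω + γ)) + b ⬝ᵥ ω - δ * ∑ i, |γ i|

/-- Feasibility for the dual subproblem: `𝟙ᵀω = 1` and `ω ≥ 0`. -/
def dualFeas (m : ℕ) (ω : Fin m → ℝ) : Prop :=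
  ∑ j, ω j = 1 ∧ ∀ j, 0 ≤ ω j

/-- Feasibility for the primal subproblem: `‖d‖_∞ ≤ δ` and `b_j + g_jᵀd ≤ z` for all `j`. -/
def primalFeas (n m : ℕ) (G : Matrix (Fin n) (Fin m) ℝ) (b : Fin m → ℝ) (δ : ℝ)
    (d : Fin n → ℝ) (z : ℝ) : Prop :=
  (∀ i, |d i| ≤ δ) ∧ ∀ j, b j + (fun i => G i j) ⬝ᵥ d ≤ z

/-- Objective of the primal subproblem. -/
noncomputable def primalObj (n : ℕ) (H : Matrix (Fin n) (Fin n) ℝ)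
    (d : Fin n → ℝ) (z : ℝ) : ℝ :=
  z + (1 / 2) * (d ⬝ᵥ H *ᵥ d)

private lemma auxA (a K : ℝ) (hK : 0 ≤ K)
    (h : ∀ t : ℝ, 0 < t → t ≤ 1/2 → t * a ≤ t^2 * K) : a ≤ 0 := by
  apply le_of_forall_pos_le_add
  intro ε hε
  set t := min (1/2) (ε / (K + 1)) with htdef
  have ht0 : 0 < t := lt_min (by norm_num) (div_pos hε (by linarith))
  have h1 := h t ht0 (min_le_left _ _)
  have h2 : t ≤ ε / (K + 1) := min_le_right _ _
  have ha : a ≤ t * K := by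
    have h1' : t * a ≤ t * (t * K) := by nlinarith [h1]
    exact le_of_mul_le_mul_left h1' ht0
  have h3 : t * K ≤ (ε / (K + 1)) * K := mul_le_mul_of_nonneg_right h2 hK
  have h4 : (ε / (K + 1)) * K ≤ ε := by
    rw [div_mul_eq_mul_div, div_le_iff₀ (by linarith)]
    nlinarith
  linarith

/-- strong duality and primal recovery.  If `(ω*, γ*)` is dual optimal, then
`(d*, z*)` with `d* = −W(Gω* + γ*)` and `z* = max_j (b_j + g_jᵀd*)` is primal optimal, and
the optimal values of the primal and dual subproblems are equal. -/
theorem stmt4 (n m : ℕ) [NeZero n] [NeZero m]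
    (G : Matrix (Fin n) (Fin m) ℝ) (b : Fin m → ℝ)
    (H W : Matrix (Fin n) (Fin n) ℝ) (hH : H.PosDef) (hW : W = H⁻¹)
    (δ : ℝ) (hδ : 0 < δ)
    (ωs : Fin m → ℝ) (γs : Fin n → ℝ) (hfeas : dualFeas m ωs)
    (hopt : ∀ (ω : Fin m → ℝ) (γ : Fin n → ℝ), dualFeas m ω →
      dualObj n m G b W δ ω γ ≤ dualObj n m G b W δ ωs γs)
    (dstar : Fin n → ℝ) (zstar : ℝ)
    (hds : dstar = -(W *ᵥ (G *ᵥ ωs + γs)))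
    (hzs : zstar = Finset.univ.sup' Finset.univ_nonempty
      fun j : Fin m => b j + (fun i => G i j) ⬝ᵥ dstar) :
    primalFeas n m G b δ dstar zstar ∧
    (∀ (d : Fin n → ℝ) (z : ℝ), primalFeas n m G b δ d z →
      primalObj n H dstar zstar ≤ primalObj n H d z) ∧
    primalObj n H dstar zstar = dualObj n m G b W δ ωs γs := by
  obtain ⟨hsum, hwnn⟩ := hfeas
  have hWpd : W.PosDef := hW ▸ hH.inv
  have hWsymm : Wᵀ = W := hWpd.isHermitian.eq
  have hHsymm : Hᵀ = H := hH.isHermitian.eq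
  have hHW : H * W = 1 := by
    rw [hW]; exact mul_nonsing_inv H (isUnit_iff_ne_zero.mpr hH.det_pos.ne')
  set v : Fin n → ℝ := G *ᵥ ωs + γs with hv
  have hsym : ∀ a c : Fin n → ℝ, a ⬝ᵥ W *ᵥ c = c ⬝ᵥ W *ᵥ a := by
    intro a c
    have key : a ᵥ* W = W *ᵥ a := by
      conv_lhs => rw [← hWsymm]
      rw [vecMul_transpose]
    rw [dotProduct_mulVec, key, dotProduct_comm]
  have hsymH : ∀ a c : Fin n → ℝ, a ⬝ᵥ H *ᵥ c = c ⬝ᵥ H *ᵥ a := by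
    intro a c
    have key : a ᵥ* H = H *ᵥ a := by
      conv_lhs => rw [← hHsymm]
      rw [vecMul_transpose]
    rw [dotProduct_mulVec, key, dotProduct_comm]
  have hWnn : ∀ u : Fin n → ℝ, 0 ≤ u ⬝ᵥ W *ᵥ u := fun u => by simpa using hWpd.posSemidef.dotProduct_mulVec_nonneg u
  have hHWv : ∀ u : Fin n → ℝ, H *ᵥ (W *ᵥ u) = u := by
    intro u
    rw [mulVec_mulVec, hHW, one_mulVec]
  have hHv : H *ᵥ dstar = -v := by
    rw [hds, mulVec_neg, hHWv]
  have hds' : ∀ u : Fin n → ℝ, dstar ⬝ᵥ u = -(u ⬝ᵥ W *ᵥ v) := by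
    intro u
    rw [hds, neg_dotProduct, dotProduct_comm]
  have hexp : ∀ (w : Fin n → ℝ) (t : ℝ), (v + t • w) ⬝ᵥ W *ᵥ (v + t • w)
      = v ⬝ᵥ W *ᵥ v + 2*t*(w ⬝ᵥ W *ᵥ v) + t^2 * (w ⬝ᵥ W *ᵥ w) := by
    intro w t
    simp only [mulVec_add, mulVec_smul, dotProduct_add, add_dotProduct,
      dotProduct_smul, smul_dotProduct, smul_eq_mul]
    rw [hsym v w]
    ring
  set S : ℝ := ∑ i, |γs i| with hS
  have hSnn : 0 ≤ S := Finset.sum_nonneg fun i _ => abs_nonneg _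
  -- complementarity in γ
  have key1 : dstar ⬝ᵥ γs = δ * S := by
    have hineq : ∀ t : ℝ, -1 < t →
        t * (dstar ⬝ᵥ γs - δ * S) ≤ t^2 * ((1/2) * (γs ⬝ᵥ W *ᵥ γs)) := by
      intro t ht
      have h0 := hopt ωs (γs + t • γs) ⟨hsum, hwnn⟩
      have harg : G *ᵥ ωs + (γs + t • γs) = v + t • γs := by rw [hv]; abel
      have habs : ∑ i, |(γs + t • γs) i| = (1 + t) * S := by
        rw [hS, Finset.mul_sum]
        apply Finset.sum_congr rfl
        intro i _
        simp only [Pi.add_apply, Pi.smul_apply, smul_eq_mul]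
        rw [show γs i + t * γs i = (1 + t) * γs i by ring, abs_mul,
          abs_of_pos (by linarith : (0:ℝ) < 1 + t)]
      simp only [dualObj] at h0
      rw [← hv, ← hS, harg, habs, hexp] at h0
      have hA := hds' γs
      rw [hA]
      linarith
    have hK : 0 ≤ (1/2) * (γs ⬝ᵥ W *ᵥ γs) := mul_nonneg (by norm_num) (hWnn γs)
    have h1 : dstar ⬝ᵥ γs - δ * S ≤ 0 :=
      auxA _ _ hK (fun t ht ht' => hineq t (by linarith))
    have h2 : -(dstar ⬝ᵥ γs - δ * S) ≤ 0 := by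
      apply auxA _ _ hK
      intro t ht ht'
      have := hineq (-t) (by linarith)
      nlinarith
    linarith
  -- optimality in ω
  have key2 : ∀ j, b j + (fun i => G i j) ⬝ᵥ dstar ≤ b ⬝ᵥ ωs + dstar ⬝ᵥ (G *ᵥ ωs) := by
    intro j
    set w : Fin n → ℝ := G *ᵥ (Pi.single j (1:ℝ) - ωs) with hw
    have hK : 0 ≤ (1/2) * (w ⬝ᵥ W *ᵥ w) := mul_nonneg (by norm_num) (hWnn w)
    have hineq : ∀ t : ℝ, 0 < t → t ≤ 1/2 →
        t * ((b j + (fun i => G i j) ⬝ᵥ dstar) - (b ⬝ᵥ ωs + dstar ⬝ᵥ (G *ᵥ ωs)))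
          ≤ t^2 * ((1/2) * (w ⬝ᵥ W *ᵥ w)) := by
      intro t ht ht'
      have hfeas' : dualFeas m (ωs + t • (Pi.single j (1:ℝ) - ωs)) := by
        refine ⟨?_, ?_⟩
        · have hsingle : ∑ k, Pi.single j (1:ℝ) k = 1 := by simp
          simp only [Pi.add_apply, Pi.smul_apply, Pi.sub_apply, smul_eq_mul]
          rw [Finset.sum_add_distrib, hsum, ← Finset.mul_sum, Finset.sum_sub_distrib,
            hsingle, hsum]
          try ring
        · intro k
          simp only [Pi.add_apply, Pi.smul_apply, Pi.sub_apply, smul_eq_mul]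
          have h1 : 0 ≤ (Pi.single j 1 : Fin m → ℝ) k := by
            rcases eq_or_ne k j with h | h <;> simp [Pi.single_apply, h]
          nlinarith [hwnn k]
      have h0 := hopt _ γs hfeas'
      have harg : G *ᵥ (ωs + t • (Pi.single j (1:ℝ) - ωs)) + γs = v + t • w := by
        rw [hw, hv, mulVec_add, mulVec_smul]; abel
      simp only [dualObj] at h0
      rw [← hv, ← hS, harg, hexp] at h0
      have hb : b ⬝ᵥ (ωs + t • (Pi.single j (1:ℝ) - ωs)) = b ⬝ᵥ ωs + t * (b j - b ⬝ᵥ ωs) := by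
        simp only [dotProduct_add, dotProduct_smul, dotProduct_sub, dotProduct_single,
          smul_eq_mul, mul_one]
        try ring
      rw [hb] at h0
      have hwv : w ⬝ᵥ W *ᵥ v = -((fun i => G i j) ⬝ᵥ dstar - dstar ⬝ᵥ (G *ᵥ ωs)) := by
        have h1 : dstar ⬝ᵥ w = -(w ⬝ᵥ W *ᵥ v) := hds' w
        have h2 : dstar ⬝ᵥ w = dstar ⬝ᵥ (G *ᵥ Pi.single j (1:ℝ)) - dstar ⬝ᵥ (G *ᵥ ωs) := by
          rw [hw, mulVec_sub, dotProduct_sub]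
        have h3 : dstar ⬝ᵥ (G *ᵥ Pi.single j (1:ℝ)) = (fun i => G i j) ⬝ᵥ dstar := by
          rw [mulVec_single_one]
          simp only [dotProduct, mul_one]
          exact Finset.sum_congr rfl fun i _ => mul_comm _ _
        linarith
      rw [hwv] at h0
      linarith
    linarith [auxA _ _ hK hineq]
  -- feasibility of dstar
  have key3 : ∀ i, |dstar i| ≤ δ := by
    intro i
    have hQe : 0 ≤ (Pi.single i 1 : Fin n → ℝ) ⬝ᵥ W *ᵥ Pi.single i 1 := hWnn _
    have hK : 0 ≤ (1/2) * ((Pi.single i 1 : Fin n → ℝ) ⬝ᵥ W *ᵥ (Pi.single i 1 : Fin n → ℝ)) :=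
      mul_nonneg (by norm_num) hQe
    have hineq : ∀ s : ℝ, |s| = 1 → ∀ t : ℝ, 0 < t → t ≤ 1/2 →
        t * (s * dstar i - δ) ≤ t^2 * ((1/2) * ((Pi.single i 1 : Fin n → ℝ) ⬝ᵥ W *ᵥ (Pi.single i 1 : Fin n → ℝ))) := by
      intro s hs t ht ht'
      have h0 := hopt ωs (γs + (t*s) • (Pi.single i 1 : Fin n → ℝ)) ⟨hsum, hwnn⟩
      have harg : G *ᵥ ωs + (γs + (t*s) • (Pi.single i 1 : Fin n → ℝ)) = v + (t*s) • (Pi.single i 1 : Fin n → ℝ) := by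
        rw [hv]; abel
      simp only [dualObj] at h0
      rw [← hv, ← hS, harg, hexp] at h0
      have habs : ∑ k, |(γs + (t*s) • (Pi.single i 1 : Fin n → ℝ)) k| ≤ S + t := by
        have step1 : ∑ k, |(γs + (t*s) • (Pi.single i 1 : Fin n → ℝ)) k|
            ≤ ∑ k, (|γs k| + |((t*s) • (Pi.single i 1 : Fin n → ℝ)) k|) := by
          apply Finset.sum_le_sum
          intro k _
          simp only [Pi.add_apply]
          exact abs_add_le _ _
        have step2 : ∑ k, (|γs k| + |((t*s) • (Pi.single i 1 : Fin n → ℝ)) k|) = S + |t*s| := by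
          rw [Finset.sum_add_distrib, ← hS]
          congr 1
          simp only [Pi.smul_apply, smul_eq_mul, abs_mul]
          rw [← Finset.mul_sum]
          have hone : ∑ k, |(Pi.single i 1 : Fin n → ℝ) k| = 1 := by
            have : ∀ k, |(Pi.single i 1 : Fin n → ℝ) k| = (Pi.single i 1 : Fin n → ℝ) k := by
              intro k
              rcases eq_or_ne k i with h | h <;> simp [Pi.single_apply, h]
            simp only [this]
            simp
          rw [hone, mul_one]
        have step3 : |t*s| = t := by rw [abs_mul, hs, mul_one, abs_of_pos ht]
        linarith
      have he : (Pi.single i 1 : Fin n → ℝ) ⬝ᵥ W *ᵥ v = -(dstar i) := by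
        have h1 := hds' ((Pi.single i 1 : Fin n → ℝ))
        have h2 : dstar ⬝ᵥ (Pi.single i 1 : Fin n → ℝ) = dstar i := by
          rw [dotProduct_single, mul_one]
        linarith
      rw [he] at h0
      have hs2 : (t*s)^2 = t^2 := by
        have : s^2 = 1 := by
          have := sq_abs s
          rw [hs] at this
          linarith [this]
        nlinarith [this]
      rw [hs2] at h0
      have hmul : δ * (∑ k, |(γs + (t*s) • (Pi.single i 1 : Fin n → ℝ)) k|) ≤ δ * (S + t) :=
        mul_le_mul_of_nonneg_left habs (le_of_lt hδ)
      nlinarith [h0, hmul, hQe]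
    have h1 := auxA _ _ hK (hineq 1 (by norm_num))
    have h2 := auxA _ _ hK (hineq (-1) (by norm_num))
    rw [abs_le]
    constructor <;> nlinarith
  -- sum identity
  have hcol : ∀ d : Fin n → ℝ, d ⬝ᵥ (G *ᵥ ωs) = ∑ j, ωs j * ((fun i => G i j) ⬝ᵥ d) := by
    intro d
    simp only [dotProduct, mulVec, Finset.mul_sum]
    rw [Finset.sum_comm]
    refine Finset.sum_congr rfl fun j _ => Finset.sum_congr rfl fun i _ => by ring
  have hbsum : b ⬝ᵥ ωs = ∑ j, ωs j * b j := by
    simp only [dotProduct]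
    exact Finset.sum_congr rfl fun j _ => mul_comm _ _
  have hcz : ∀ j, b j + (fun i => G i j) ⬝ᵥ dstar ≤ zstar := by
    intro j
    rw [hzs]
    exact Finset.le_sup' (fun j => b j + (fun i => G i j) ⬝ᵥ dstar) (Finset.mem_univ j)
  have hzle : zstar ≤ b ⬝ᵥ ωs + dstar ⬝ᵥ (G *ᵥ ωs) := by
    rw [hzs]
    apply Finset.sup'_le
    intro j _
    exact key2 j
  have hzge : b ⬝ᵥ ωs + dstar ⬝ᵥ (G *ᵥ ωs) ≤ zstar := by
    rw [hcol dstar, hbsum, ← Finset.sum_add_distrib]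
    calc ∑ j, (ωs j * b j + ωs j * ((fun i => G i j) ⬝ᵥ dstar))
        ≤ ∑ j, ωs j * zstar := by
          apply Finset.sum_le_sum
          intro j _
          have h1 : ωs j * b j + ωs j * ((fun i => G i j) ⬝ᵥ dstar)
              = ωs j * (b j + (fun i => G i j) ⬝ᵥ dstar) := by ring
          rw [h1]
          exact mul_le_mul_of_nonneg_left (hcz j) (hwnn j)
      _ = zstar := by rw [← Finset.sum_mul, hsum, one_mul]
  have hzeq : zstar = b ⬝ᵥ ωs + dstar ⬝ᵥ (G *ᵥ ωs) := le_antisymm hzle hzge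
  have hQd : dstar ⬝ᵥ H *ᵥ dstar = v ⬝ᵥ W *ᵥ v := by
    rw [hHv, dotProduct_neg]
    have := hds' v
    linarith
  have hdGω : dstar ⬝ᵥ (G *ᵥ ωs) = -(v ⬝ᵥ W *ᵥ v) - δ * S := by
    have h1 : dstar ⬝ᵥ v = -(v ⬝ᵥ W *ᵥ v) := hds' v
    have h2 : dstar ⬝ᵥ v = dstar ⬝ᵥ (G *ᵥ ωs) + dstar ⬝ᵥ γs := by rw [hv, dotProduct_add]
    linarith
  have hval : primalObj n H dstar zstar = dualObj n m G b W δ ωs γs := by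
    simp only [primalObj, dualObj]
    rw [← hv, ← hS, hQd, hzeq, hdGω]
    ring
  refine ⟨⟨key3, hcz⟩, ?_, hval⟩
  intro d z hdz
  obtain ⟨hd, hz⟩ := hdz
  have h2 : b ⬝ᵥ ωs + d ⬝ᵥ (G *ᵥ ωs) ≤ z := by
    rw [hcol d, hbsum, ← Finset.sum_add_distrib]
    calc ∑ j, (ωs j * b j + ωs j * ((fun i => G i j) ⬝ᵥ d))
        ≤ ∑ j, ωs j * z := by
          apply Finset.sum_le_sum
          intro j _
          have h1 : ωs j * b j + ωs j * ((fun i => G i j) ⬝ᵥ d)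
              = ωs j * (b j + (fun i => G i j) ⬝ᵥ d) := by ring
          rw [h1]
          exact mul_le_mul_of_nonneg_left (hz j) (hwnn j)
      _ = z := by rw [← Finset.sum_mul, hsum, one_mul]
  have h3 : d ⬝ᵥ γs ≤ δ * S := by
    rw [dotProduct, hS, Finset.mul_sum]
    apply Finset.sum_le_sum
    intro i _
    calc d i * γs i ≤ |d i * γs i| := le_abs_self _
      _ = |d i| * |γs i| := abs_mul _ _
      _ ≤ δ * |γs i| := mul_le_mul_of_nonneg_right (hd i) (abs_nonneg _)
  have h4 : 0 ≤ d ⬝ᵥ H *ᵥ d + 2*(d ⬝ᵥ v) + v ⬝ᵥ W *ᵥ v := by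
    have h5 : 0 ≤ (d + W *ᵥ v) ⬝ᵥ H *ᵥ (d + W *ᵥ v) := by simpa using hH.posSemidef.dotProduct_mulVec_nonneg (d + W *ᵥ v)
    have hexp2 : (d + W *ᵥ v) ⬝ᵥ H *ᵥ (d + W *ᵥ v)
        = d ⬝ᵥ H *ᵥ d + 2*(d ⬝ᵥ v) + v ⬝ᵥ W *ᵥ v := by
      simp only [mulVec_add, dotProduct_add, add_dotProduct]
      rw [hHWv v, hsymH (W *ᵥ v) d, hHWv v, dotProduct_comm (W *ᵥ v) v]
      ring
    rw [hexp2] at h5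
    exact h5
  have hdv : d ⬝ᵥ v = d ⬝ᵥ (G *ᵥ ωs) + d ⬝ᵥ γs := by rw [hv, dotProduct_add]
  simp only [primalObj]
  rw [hQd, hzeq, hdGω]
  linarith
end

section
/- Although the dual subproblem need not have a unique optimal solution, every optimal solution yields the same search direction: if (ω¹, γ¹) and (ω², γ²) are both optimal solutions of the dual subproblem, then Gω¹ + γ¹ = Gω² + γ², and hence −W(Gω¹ + γ¹) = −W(Gω² + γ²). -/
open Matrix

lemma quad_parallelogram (n : ℕ) (W : Matrix (Fin n) (Fin n) ℝ) (a c : Fin n → ℝ) :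
    (a + c) ⬝ᵥ W *ᵥ (a + c) + (a - c) ⬝ᵥ W *ᵥ (a - c)
      = 2 * (a ⬝ᵥ W *ᵥ a) + 2 * (c ⬝ᵥ W *ᵥ c) := by
  simp only [Matrix.mulVec_add, Matrix.mulVec_sub, dotProduct_add, add_dotProduct,
    dotProduct_sub, sub_dotProduct]
  ring

lemma quad_smul (n : ℕ) (W : Matrix (Fin n) (Fin n) ℝ) (c : ℝ) (a : Fin n → ℝ) :
    (c • a) ⬝ᵥ W *ᵥ (c • a) = c ^ 2 * (a ⬝ᵥ W *ᵥ a) := by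
  simp only [Matrix.mulVec_smul, dotProduct_smul, smul_dotProduct, smul_eq_mul]
  ring

/-- every optimal solution of the dual subproblem yields the same search
direction: if `(ω¹, γ¹)` and `(ω², γ²)` are both dual optimal, then `Gω¹ + γ¹ = Gω² + γ²`
and hence `−W(Gω¹ + γ¹) = −W(Gω² + γ²)`. -/
theorem stmt5 (n m : ℕ) [NeZero n] [NeZero m]
    (G : Matrix (Fin n) (Fin m) ℝ) (b : Fin m → ℝ)
    (H W : Matrix (Fin n) (Fin n) ℝ) (hH : H.PosDef) (hW : W = H⁻¹)
    (δ : ℝ) (hδ : 0 < δ)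
    (ω₁ ω₂ : Fin m → ℝ) (γ₁ γ₂ : Fin n → ℝ)
    (hfeas₁ : dualFeas m ω₁) (hfeas₂ : dualFeas m ω₂)
    (hopt₁ : ∀ (ω : Fin m → ℝ) (γ : Fin n → ℝ), dualFeas m ω →
      dualObj n m G b W δ ω γ ≤ dualObj n m G b W δ ω₁ γ₁)
    (hopt₂ : ∀ (ω : Fin m → ℝ) (γ : Fin n → ℝ), dualFeas m ω →
      dualObj n m G b W δ ω γ ≤ dualObj n m G b W δ ω₂ γ₂) :
    G *ᵥ ω₁ + γ₁ = G *ᵥ ω₂ + γ₂ ∧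
      -(W *ᵥ (G *ᵥ ω₁ + γ₁)) = -(W *ᵥ (G *ᵥ ω₂ + γ₂)) := by
  have hWpd : W.PosDef := hW ▸ hH.inv
  set z₁ := G *ᵥ ω₁ + γ₁ with hz₁
  set z₂ := G *ᵥ ω₂ + γ₂ with hz₂
  suffices hz : z₁ = z₂ by exact ⟨hz, by rw [hz]⟩
  by_contra hne
  -- midpoint
  set ωm : Fin m → ℝ := (1 / 2 : ℝ) • (ω₁ + ω₂) with hωm
  set γm : Fin n → ℝ := (1 / 2 : ℝ) • (γ₁ + γ₂) with hγm
  have hfeasm : dualFeas m ωm := by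
    constructor
    · simp only [hωm, Pi.smul_apply, Pi.add_apply, smul_eq_mul]
      rw [← Finset.mul_sum, Finset.sum_add_distrib, hfeas₁.1, hfeas₂.1]
      norm_num
    · intro j
      have := hfeas₁.2 j
      have := hfeas₂.2 j
      simp only [hωm, Pi.smul_apply, Pi.add_apply, smul_eq_mul]
      linarith
  have hzm : G *ᵥ ωm + γm = (1 / 2 : ℝ) • (z₁ + z₂) := by
    rw [hωm, hγm, hz₁, hz₂, Matrix.mulVec_smul, Matrix.mulVec_add]
    module
  -- positivity of the quadratic form on d := z₁ - z₂
  have hd : (0 : ℝ) < (z₁ - z₂) ⬝ᵥ W *ᵥ (z₁ - z₂) := by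
    have := hWpd.dotProduct_mulVec_pos (x := z₁ - z₂) (sub_ne_zero.mpr hne)
    simpa using this
  -- equal optimal values
  have heq : dualObj n m G b W δ ω₁ γ₁ = dualObj n m G b W δ ω₂ γ₂ :=
    le_antisymm (hopt₂ ω₁ γ₁ hfeas₁) (hopt₁ ω₂ γ₂ hfeas₂)
  have hm := hopt₁ ωm γm hfeasm
  -- expand the objective at the midpoint
  have habs : ∑ i, |γm i| ≤ (1 / 2) * (∑ i, |γ₁ i| + ∑ i, |γ₂ i|) := by
    rw [← Finset.sum_add_distrib, Finset.mul_sum]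
    refine Finset.sum_le_sum fun i _ => ?_
    simp only [hγm, Pi.smul_apply, Pi.add_apply, smul_eq_mul]
    calc |1 / 2 * (γ₁ i + γ₂ i)| = 1 / 2 * |γ₁ i + γ₂ i| := by
          rw [abs_mul]; norm_num
      _ ≤ 1 / 2 * (|γ₁ i| + |γ₂ i|) := by
          have := abs_add_le (γ₁ i) (γ₂ i); linarith
  have hbm : b ⬝ᵥ ωm = (1 / 2) * (b ⬝ᵥ ω₁ + b ⬝ᵥ ω₂) := by
    rw [hωm, dotProduct_smul, dotProduct_add, smul_eq_mul]
  have hquadm : (G *ᵥ ωm + γm) ⬝ᵥ W *ᵥ (G *ᵥ ωm + γm)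
      = (1 / 4) * (2 * (z₁ ⬝ᵥ W *ᵥ z₁) + 2 * (z₂ ⬝ᵥ W *ᵥ z₂)
          - (z₁ - z₂) ⬝ᵥ W *ᵥ (z₁ - z₂)) := by
    rw [hzm, quad_smul]
    have := quad_parallelogram n W z₁ z₂
    nlinarith [this]
  -- lower bound on midpoint objective
  have key : (dualObj n m G b W δ ω₁ γ₁ + dualObj n m G b W δ ω₂ γ₂) / 2
      + (1 / 8) * ((z₁ - z₂) ⬝ᵥ W *ᵥ (z₁ - z₂)) ≤ dualObj n m G b W δ ωm γm := by
    simp only [dualObj, ← hz₁, ← hz₂]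
    rw [hquadm, hbm]
    nlinarith [habs, hδ.le, mul_le_mul_of_nonneg_left habs hδ.le]
  rw [heq] at hm key
  linarith
end

section
/- If the optimal solution (d*, z*) of the primal subproblem satisfies ‖d*‖_∞ < δ (i.e., the trust-region constraint is inactive), then every optimal solution (ω, γ) of the dual subproblem has γ = 0. -/
open Matrix

private lemma auxle (a B c : ℝ) (hc : 0 < c)
    (h : ∀ ε : ℝ, 0 < ε → ε < c → a ≤ ε * B) : a ≤ 0 := by
  by_contra hpos
  push_neg at hpos
  rcases le_or_gt B 0 with hB | hB
  · have h1 := h (c / 2) (by linarith) (by linarith)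
    nlinarith
  · have hε : 0 < min (c / 2) (a / (2 * B)) := lt_min (by linarith) (by positivity)
    have h1 := h _ hε (lt_of_le_of_lt (min_le_left _ _) (by linarith))
    have h2 : min (c / 2) (a / (2 * B)) * B ≤ a / (2 * B) * B :=
      mul_le_mul_of_nonneg_right (min_le_right _ _) hB.le
    have h3 : a / (2 * B) * B = a / 2 := by field_simp
    linarith

private lemma sum_abs_single (n : ℕ) (γ : Fin n → ℝ) (i : Fin n) (t : ℝ) :
    ∑ j, |(γ + t • (Pi.single i (1:ℝ) : Fin n → ℝ)) j| = ∑ j, |γ j| - |γ i| + |γ i + t| := by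
  have hupd : γ + t • (Pi.single i (1:ℝ) : Fin n → ℝ) = Function.update γ i (γ i + t) := by
    funext j
    rcases eq_or_ne j i with rfl | hj
    · simp
    · simp [hj, Pi.single_eq_of_ne hj]
  rw [hupd]
  have h1 : ∀ (c : ℝ), ∑ j, |Function.update γ i c j| = |c| + ∑ j ∈ Finset.univ \ {i}, |γ j| := by
    intro c
    have h : (fun j => |Function.update γ i c j|) = Function.update (fun j => |γ j|) i |c| := by
      funext j; exact (Function.apply_update (fun _ x => |x|) γ i c j)
    rw [h, Finset.sum_update_of_mem (Finset.mem_univ i)]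
  have h2 : ∑ j, |γ j| = |γ i| + ∑ j ∈ Finset.univ \ {i}, |γ j| := by
    simpa using h1 (γ i)
  rw [h1, h2]; ring

/-- if the optimal solution `(d*, z*)` of the primal subproblem has the
trust-region constraint inactive (`‖d*‖_∞ < δ`), then every optimal solution `(ω, γ)` of
the dual subproblem has `γ = 0`. -/
theorem stmt9 (n m : ℕ) [NeZero n] [NeZero m]
    (G : Matrix (Fin n) (Fin m) ℝ) (b : Fin m → ℝ)
    (H W : Matrix (Fin n) (Fin n) ℝ) (hH : H.PosDef) (hW : W = H⁻¹)
    (δ : ℝ) (hδ : 0 < δ)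
    (dstar : Fin n → ℝ) (zstar : ℝ)
    (hpfeas : primalFeas n m G b δ dstar zstar)
    (hpopt : ∀ (d : Fin n → ℝ) (z : ℝ), primalFeas n m G b δ d z →
      primalObj n H dstar zstar ≤ primalObj n H d z)
    (hinactive : ∀ i, |dstar i| < δ) :
    ∀ (ω : Fin m → ℝ) (γ : Fin n → ℝ), dualFeas m ω →
      (∀ (ω' : Fin m → ℝ) (γ' : Fin n → ℝ), dualFeas m ω' →
        dualObj n m G b W δ ω' γ' ≤ dualObj n m G b W δ ω γ) →
      γ = 0 := by
  intro ω γ hdf hdopt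
  have hWpd : W.PosDef := hW ▸ hH.inv
  have hWs : Wᵀ = W := hWpd.isHermitian
  have hHs : Hᵀ = H := hH.isHermitian
  have hsymW : ∀ x y : Fin n → ℝ, x ⬝ᵥ W *ᵥ y = y ⬝ᵥ W *ᵥ x := by
    intro x y
    rw [Matrix.dotProduct_mulVec, ← Matrix.mulVec_transpose, hWs, dotProduct_comm]
  have hsymH : ∀ x y : Fin n → ℝ, x ⬝ᵥ H *ᵥ y = y ⬝ᵥ H *ᵥ x := by
    intro x y
    rw [Matrix.dotProduct_mulVec, ← Matrix.mulVec_transpose, hHs, dotProduct_comm]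
  have hHW : ∀ x : Fin n → ℝ, H *ᵥ (W *ᵥ x) = x := by
    intro x
    rw [hW, Matrix.mulVec_mulVec, Matrix.mul_nonsing_inv _ hH.det_pos.ne'.isUnit,
      Matrix.one_mulVec]
  set u : Fin n → ℝ := G *ᵥ ω + γ with hu
  set d : Fin n → ℝ := -(W *ᵥ u) with hd
  have hquad : ∀ (x : Fin n → ℝ) (t : ℝ),
      (u + t • x) ⬝ᵥ W *ᵥ (u + t • x) =
        u ⬝ᵥ W *ᵥ u + 2 * t * (x ⬝ᵥ W *ᵥ u) + t ^ 2 * (x ⬝ᵥ W *ᵥ x) := by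
    intro x t
    simp only [Matrix.mulVec_add, dotProduct_add, add_dotProduct,
      Matrix.mulVec_smul, smul_dotProduct, dotProduct_smul, smul_eq_mul]
    linear_combination (t : ℝ) * hsymW u x
  -- key inequality from varying γ in coordinate i
  have hkey : ∀ (i : Fin n) (t : ℝ),
      t * d i - δ * (|γ i + t| - |γ i|) ≤ t ^ 2 * W i i / 2 := by
    intro i t
    have hfe := hdopt ω (γ + t • (Pi.single i (1:ℝ) : Fin n → ℝ)) hdf
    simp only [dualObj] at hfe
    have hGe : G *ᵥ ω + (γ + t • (Pi.single i (1:ℝ) : Fin n → ℝ)) =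
        u + t • (Pi.single i (1:ℝ) : Fin n → ℝ) := by
      rw [hu, add_assoc]
    rw [hGe, ← hu, hquad, sum_abs_single] at hfe
    have he1 : (Pi.single i (1:ℝ) : Fin n → ℝ) ⬝ᵥ W *ᵥ u = -(d i) := by
      rw [single_dotProduct, hd]; simp
    have he2 : (Pi.single i (1:ℝ) : Fin n → ℝ) ⬝ᵥ W *ᵥ (Pi.single i (1:ℝ) : Fin n → ℝ)
        = W i i := by
      rw [Matrix.mulVec_single, single_dotProduct]; simp
    rw [he1, he2] at hfe
    nlinarith [hfe]
  -- |d i| ≤ δ for all i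
  have habs : ∀ i, |d i| ≤ δ := by
    intro i
    have key : |d i| - δ ≤ 0 := by
      apply auxle _ (W i i / 2) 1 one_pos
      intro ε hε _
      rcases le_or_gt 0 (d i) with h | h
      · have hk := hkey i ε
        have ht : |γ i + ε| - |γ i| ≤ ε := by
          have := abs_add_le (γ i) ε
          rw [abs_of_pos hε] at this
          linarith
        rw [abs_of_nonneg h]
        nlinarith
      · have hk := hkey i (-ε)
        have ht : |γ i + -ε| - |γ i| ≤ ε := by
          have := abs_add_le (γ i) (-ε)
          rw [abs_neg, abs_of_pos hε] at this
          linarith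
        rw [abs_of_neg h]
        nlinarith
    linarith
  -- complementarity: γ i * d i = δ * |γ i|
  have hcs : ∀ i, γ i * d i = δ * |γ i| := by
    intro i
    rcases lt_trichotomy (γ i) 0 with h | h | h
    · have h1 : d i + δ ≤ 0 := by
        apply auxle _ (W i i / 2) (-(γ i)) (by linarith)
        intro ε hε hεc
        have hk := hkey i ε
        have ht : |γ i + ε| - |γ i| = -ε := by
          rw [abs_of_neg h, abs_of_neg (by linarith : γ i + ε < 0)]
          ring
        rw [ht] at hk
        nlinarith
      have h2 : -δ ≤ d i := (abs_le.1 (habs i)).1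
      have h3 : d i = -δ := by linarith
      rw [h3, abs_of_neg h]; ring
    · simp [h]
    · have h1 : δ - d i ≤ 0 := by
        apply auxle _ (W i i / 2) (γ i) h
        intro ε hε hεc
        have hk := hkey i (-ε)
        have ht : |γ i + -ε| - |γ i| = -ε := by
          rw [abs_of_pos h, abs_of_pos (by linarith : 0 < γ i + -ε)]
          ring
        rw [ht] at hk
        nlinarith
      have h2 : d i ≤ δ := (abs_le.1 (habs i)).2
      have h3 : d i = δ := by linarith
      rw [h3, abs_of_pos h]; ring
  -- feasibility of (d, z) from varying ω
  have hz : ∀ j, b j + (fun i => G i j) ⬝ᵥ d ≤ b ⬝ᵥ ω + (G *ᵥ ω) ⬝ᵥ d := by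
    intro j
    set v : Fin n → ℝ := G *ᵥ ((Pi.single j (1:ℝ) : Fin m → ℝ) - ω) with hv
    have hsingle_sum : ∑ k, (Pi.single j (1:ℝ) : Fin m → ℝ) k = 1 := by simp
    have hb : b j - b ⬝ᵥ ω - v ⬝ᵥ W *ᵥ u ≤ 0 := by
      apply auxle _ (v ⬝ᵥ W *ᵥ v / 2) 1 one_pos
      intro t ht ht1
      have hfeas : dualFeas m (ω + t • ((Pi.single j (1:ℝ) : Fin m → ℝ) - ω)) := by
        constructor
        · simp only [Pi.add_apply, Pi.smul_apply, Pi.sub_apply, smul_eq_mul]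
          rw [Finset.sum_add_distrib, ← Finset.mul_sum, Finset.sum_sub_distrib,
            hsingle_sum, hdf.1]
          ring
        · intro k
          simp only [Pi.add_apply, Pi.smul_apply, Pi.sub_apply, smul_eq_mul]
          rcases eq_or_ne k j with rfl | hk
          · have := hdf.2 k
            simp only [Pi.single_eq_same]
            nlinarith
          · have := hdf.2 k
            rw [Pi.single_eq_of_ne hk]
            nlinarith
      have hfe := hdopt (ω + t • ((Pi.single j (1:ℝ) : Fin m → ℝ) - ω)) γ hfeas
      simp only [dualObj] at hfe
      have hGe : G *ᵥ (ω + t • ((Pi.single j (1:ℝ) : Fin m → ℝ) - ω)) + γ = u + t • v := by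
        rw [Matrix.mulVec_add, Matrix.mulVec_smul, hu, hv]
        exact add_right_comm _ _ _
      have hbe : b ⬝ᵥ (ω + t • ((Pi.single j (1:ℝ) : Fin m → ℝ) - ω)) =
          b ⬝ᵥ ω + t * (b j - b ⬝ᵥ ω) := by
        rw [dotProduct_add, dotProduct_smul, dotProduct_sub,
          dotProduct_single]
        simp [smul_eq_mul]
      rw [hGe, ← hu, hquad, hbe] at hfe
      nlinarith
    have hWud : W *ᵥ u = -d := by rw [hd]; simp
    have hvd : v ⬝ᵥ d = (fun i => G i j) ⬝ᵥ d - (G *ᵥ ω) ⬝ᵥ d := by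
      rw [hv, Matrix.mulVec_sub, sub_dotProduct, Matrix.mulVec_single]
      simp [mul_one]; rfl
    rw [hWud, dotProduct_neg, hvd] at hb
    linarith
  -- strong duality at (d, z)
  have hD : primalObj n H d (b ⬝ᵥ ω + (G *ᵥ ω) ⬝ᵥ d) = dualObj n m G b W δ ω γ := by
    have p1 : H *ᵥ d = -u := by rw [hd, Matrix.mulVec_neg, hHW]
    have p2 : d ⬝ᵥ H *ᵥ d = u ⬝ᵥ W *ᵥ u := by
      rw [p1, dotProduct_neg, hd, neg_dotProduct, neg_neg,
        dotProduct_comm]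
    have hGω : G *ᵥ ω = u - γ := by rw [hu]; abel
    have hγd : γ ⬝ᵥ d = δ * ∑ i, |γ i| := by
      show ∑ i, γ i * d i = _
      rw [Finset.mul_sum]
      exact Finset.sum_congr rfl fun i _ => hcs i
    have hud : u ⬝ᵥ d = -(u ⬝ᵥ W *ᵥ u) := by
      rw [hd, dotProduct_neg]
    have p3 : (G *ᵥ ω) ⬝ᵥ d = -(u ⬝ᵥ W *ᵥ u) - δ * ∑ i, |γ i| := by
      rw [hGω, sub_dotProduct, hud, hγd]
    simp only [primalObj, dualObj, ← hu]
    linear_combination (1 / 2 : ℝ) * p2 + p3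
  -- weak duality with slack against (dstar, zstar)
  have e2 : (dstar + W *ᵥ u) ⬝ᵥ H *ᵥ (dstar + W *ᵥ u) =
      dstar ⬝ᵥ H *ᵥ dstar + 2 * (dstar ⬝ᵥ u) + u ⬝ᵥ W *ᵥ u := by
    simp only [Matrix.mulVec_add, dotProduct_add, add_dotProduct]
    rw [hsymH (W *ᵥ u) dstar, hHW, dotProduct_comm (W *ᵥ u) u]
    rw [hsymW u u]
    ring
  have e2nn : 0 ≤ (dstar + W *ᵥ u) ⬝ᵥ H *ᵥ (dstar + W *ᵥ u) := by
    have := hH.posSemidef.dotProduct_mulVec_nonneg (dstar + W *ᵥ u)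
    simpa using this
  have e1 : b ⬝ᵥ ω + dstar ⬝ᵥ (G *ᵥ ω) ≤ zstar := by
    have expand : b ⬝ᵥ ω + dstar ⬝ᵥ (G *ᵥ ω) =
        ∑ j, (b j + (fun i => G i j) ⬝ᵥ dstar) * ω j := by
      simp only [dotProduct, Matrix.mulVec, Finset.mul_sum]
      rw [Finset.sum_comm, ← Finset.sum_add_distrib]
      refine Finset.sum_congr rfl fun j _ => ?_
      rw [add_mul, Finset.sum_mul]
      congr 1
      exact Finset.sum_congr rfl fun i _ => by ring
    rw [expand]
    calc ∑ j, (b j + (fun i => G i j) ⬝ᵥ dstar) * ω j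
        ≤ ∑ j, zstar * ω j :=
          Finset.sum_le_sum fun j _ =>
            mul_le_mul_of_nonneg_right (hpfeas.2 j) (hdf.2 j)
      _ = zstar := by rw [← Finset.mul_sum, hdf.1, mul_one]
  have e3 : ∑ i, (δ - |dstar i|) * |γ i| ≤ δ * ∑ i, |γ i| - γ ⬝ᵥ dstar := by
    have hsum : δ * ∑ i, |γ i| - γ ⬝ᵥ dstar = ∑ i, (δ * |γ i| - γ i * dstar i) := by
      rw [Finset.mul_sum, Finset.sum_sub_distrib]
      rfl
    rw [hsum]
    refine Finset.sum_le_sum fun i _ => ?_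
    have h1 : γ i * dstar i ≤ |γ i| * |dstar i| := by
      have := le_abs_self (γ i * dstar i)
      rw [abs_mul] at this
      linarith
    nlinarith [abs_nonneg (γ i), hinactive i]
  have hsplit : dstar ⬝ᵥ (G *ᵥ ω) = dstar ⬝ᵥ u - dstar ⬝ᵥ γ := by
    have : dstar ⬝ᵥ u = dstar ⬝ᵥ (G *ᵥ ω) + dstar ⬝ᵥ γ := by
      rw [hu, dotProduct_add]
    linarith
  have hcomm : γ ⬝ᵥ dstar = dstar ⬝ᵥ γ := dotProduct_comm _ _
  have hE : dualObj n m G b W δ ω γ ≤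
      primalObj n H dstar zstar - ∑ i, (δ - |dstar i|) * |γ i| := by
    simp only [dualObj, primalObj, ← hu]
    linarith [e1, e2, e2nn, e3, hsplit, hcomm]
  -- chain the inequalities
  have hfz := hpopt d (b ⬝ᵥ ω + (G *ᵥ ω) ⬝ᵥ d) ⟨habs, hz⟩
  have hchain : primalObj n H dstar zstar ≤ dualObj n m G b W δ ω γ := hD ▸ hfz
  have hterm : ∀ i ∈ Finset.univ, 0 ≤ (δ - |dstar i|) * |γ i| := fun i _ =>
    mul_nonneg (by linarith [hinactive i]) (abs_nonneg _)
  have hSz : ∑ i, (δ - |dstar i|) * |γ i| = 0 :=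
    le_antisymm (by linarith) (Finset.sum_nonneg hterm)
  funext i
  have hzero := (Finset.sum_eq_zero_iff_of_nonneg hterm).1 hSz i (Finset.mem_univ i)
  rcases mul_eq_zero.1 hzero with hc | hc
  · exact absurd hc (by have := hinactive i; intro hcc; linarith)
  · exact abs_eq_zero.1 hc
end

section
/- The damped BFGS update preserves symmetric positive definiteness: if H ∈ ℝ^{n×n} is symmetric positive definite and s, v ∈ ℝ^n satisfy s ≠ 0 and sᵀv > 0, then the matrix H⁺ = (I − s sᵀH/(sᵀHs))ᵀ H (I − s sᵀH/(sᵀHs)) + v vᵀ/(sᵀv) is symmetric positive definite. -/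
open Matrix

lemma vecMulVec_mulVec' {n : ℕ} (a b x : Fin n → ℝ) :
    vecMulVec a b *ᵥ x = (b ⬝ᵥ x) • a := by
  ext i
  simp only [vecMulVec, mulVec, dotProduct, Pi.smul_apply, smul_eq_mul, of_apply]
  rw [Finset.sum_mul]
  exact Finset.sum_congr rfl fun k _ => by ring

/-- the damped BFGS update preserves symmetric positive definiteness:
if `H` is SPD, `s ≠ 0`, and `sᵀv > 0`, then
`H⁺ = (I − ssᵀH/(sᵀHs))ᵀ H (I − ssᵀH/(sᵀHs)) + vvᵀ/(sᵀv)` is SPD. -/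
theorem stmt12 (n : ℕ) [NeZero n]
    (H : Matrix (Fin n) (Fin n) ℝ) (hH : H.PosDef)
    (s v : Fin n → ℝ) (hs : s ≠ 0) (hsv : 0 < s ⬝ᵥ v) :
    (((1 : Matrix (Fin n) (Fin n) ℝ) - (s ⬝ᵥ H *ᵥ s)⁻¹ • (vecMulVec s s * H))ᵀ * H *
        ((1 : Matrix (Fin n) (Fin n) ℝ) - (s ⬝ᵥ H *ᵥ s)⁻¹ • (vecMulVec s s * H)) +
      (s ⬝ᵥ v)⁻¹ • vecMulVec v v).PosDef := by
  set A : Matrix (Fin n) (Fin n) ℝ :=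
    (1 : Matrix (Fin n) (Fin n) ℝ) - (s ⬝ᵥ H *ᵥ s)⁻¹ • (vecMulVec s s * H) with hA
  have h1 : (Aᵀ * H * A).PosSemidef := by
    have := hH.posSemidef.conjTranspose_mul_mul_same A
    simpa using this
  have h2 : ((s ⬝ᵥ v)⁻¹ • vecMulVec v v).PosSemidef := by
    refine posSemidef_iff_dotProduct_mulVec.mpr ⟨?_, ?_⟩
    · ext i j
      simp [vecMulVec, mul_comm]
    · intro x
      have : x ⬝ᵥ ((s ⬝ᵥ v)⁻¹ • vecMulVec v v) *ᵥ x = (s ⬝ᵥ v)⁻¹ * (v ⬝ᵥ x) ^ 2 := by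
        rw [smul_mulVec, vecMulVec_mulVec', dotProduct_smul, dotProduct_smul,
          dotProduct_comm x v, smul_eq_mul, smul_eq_mul]
        ring
      simp only [star_trivial]
      rw [this]
      positivity
  refine posDef_iff_dotProduct_mulVec.mpr ⟨?_, ?_⟩
  · exact h1.1.add h2.1
  · intro x hx
    simp only [star_trivial, add_mulVec, dotProduct_add]
    have hq1 : 0 ≤ x ⬝ᵥ (Aᵀ * H * A) *ᵥ x := by simpa using h1.dotProduct_mulVec_nonneg x
    have hq2 : 0 ≤ x ⬝ᵥ ((s ⬝ᵥ v)⁻¹ • vecMulVec v v) *ᵥ x := by simpa using h2.dotProduct_mulVec_nonneg x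
    by_cases hAx : A *ᵥ x = 0
    · -- then x is a nonzero multiple of s
      have hxs : x = ((s ⬝ᵥ H *ᵥ s)⁻¹ * (s ⬝ᵥ H *ᵥ x)) • s := by
        have := hAx
        rw [hA, sub_mulVec, one_mulVec, smul_mulVec, ← mulVec_mulVec,
          vecMulVec_mulVec', sub_eq_zero] at this
        rw [smul_smul] at this; exact this
      set c : ℝ := (s ⬝ᵥ H *ᵥ s)⁻¹ * (s ⬝ᵥ H *ᵥ x) with hc
      have hc0 : c ≠ 0 := by
        intro h
        apply hx
        rw [hxs, h, zero_smul]
      have hvx : v ⬝ᵥ x = c * (v ⬝ᵥ s) := by rw [hxs]; simp [dotProduct_smul, hc]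
      have hvs : v ⬝ᵥ s ≠ 0 := by rw [dotProduct_comm]; exact ne_of_gt hsv
      have hq2' : 0 < x ⬝ᵥ ((s ⬝ᵥ v)⁻¹ • vecMulVec v v) *ᵥ x := by
        have : x ⬝ᵥ ((s ⬝ᵥ v)⁻¹ • vecMulVec v v) *ᵥ x = (s ⬝ᵥ v)⁻¹ * (v ⬝ᵥ x) ^ 2 := by
          rw [smul_mulVec, vecMulVec_mulVec', dotProduct_smul, dotProduct_smul,
            dotProduct_comm x v, smul_eq_mul, smul_eq_mul]
          ring
        rw [this, hvx]
        have : c * (v ⬝ᵥ s) ≠ 0 := mul_ne_zero hc0 hvs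
        positivity
      linarith
    · have hq1' : 0 < x ⬝ᵥ (Aᵀ * H * A) *ᵥ x := by
        have := hH.dotProduct_mulVec_pos hAx
        simp only [star_trivial] at this
        calc 0 < (A *ᵥ x) ⬝ᵥ H *ᵥ (A *ᵥ x) := this
        _ = x ⬝ᵥ (Aᵀ * H * A) *ᵥ x := by
            rw [← mulVec_mulVec, ← mulVec_mulVec, dotProduct_mulVec x,
              vecMul_transpose]
      linarith
end

section
/- The random QP generation procedure produces a subproblem whose primal solution is the prescribed direction: let G ∈ ℝ^{n×m} have columns g_1, …, g_m, let δ > 0, let d* ∈ ℝ^n with ‖d*‖_∞ ≤ δ, and let ω* ∈ ℝ^m with ω* ≥ 0 and 𝟙ᵀω* = 1. Define σ* = max(−d* − Gω*, 0) and ρ* = max(d* + Gω*, 0) componentwise, and assume the complementarity conditions: for each i ∈ {1,…,n}, σ*_i > 0 implies d*_i = δ, and ρ*_i > 0 implies d*_i = −δ. Let u ∈ ℝ and v_ω ∈ ℝ^m with v_ω ≥ 0 and ω*_j (v_ω)_j = 0 for all j, and set b = Gᵀ(Gω* + σ* − ρ*) + u𝟙 − v_ω. Then (d*, u) is the unique optimal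 solution of the primal subproblem with H = W = I: minimize z + (1/2)dᵀd over (d, z) ∈ ℝ^n × ℝ subject to ‖d‖_∞ ≤ δ and b_j + g_jᵀd ≤ z for all j ∈ {1,…,m}. -/
open Matrix

/-- the random QP generation procedure produces a subproblem whose primal
solution is the prescribed direction: with `σ* = max(−d* − Gω*, 0)`,
`ρ* = max(d* + Gω*, 0)`, complementarity as assumed, and
`b = Gᵀ(Gω* + σ* − ρ*) + u𝟙 − v_ω`, the pair `(d*, u)` is the unique optimal solution of
the primal subproblem with `H = W = I`. -/
theorem stmt17 (n m : ℕ) [NeZero n] [NeZero m]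
    (G : Matrix (Fin n) (Fin m) ℝ) (δ : ℝ) (hδ : 0 < δ)
    (dstar : Fin n → ℝ) (hdstar : ∀ i, |dstar i| ≤ δ)
    (ωstar : Fin m → ℝ) (hω0 : ∀ j, 0 ≤ ωstar j) (hω1 : ∑ j, ωstar j = 1)
    (σstar ρstar : Fin n → ℝ)
    (hσ : σstar = fun i => max (-(dstar i) - (G *ᵥ ωstar) i) 0)
    (hρ : ρstar = fun i => max (dstar i + (G *ᵥ ωstar) i) 0)
    (hcσ : ∀ i, 0 < σstar i → dstar i = δ)
    (hcρ : ∀ i, 0 < ρstar i → dstar i = -δ)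
    (u : ℝ) (vω : Fin m → ℝ) (hv0 : ∀ j, 0 ≤ vω j) (hcv : ∀ j, ωstar j * vω j = 0)
    (b : Fin m → ℝ)
    (hb : b = Gᵀ *ᵥ (G *ᵥ ωstar + σstar - ρstar) + (fun _ => u) - vω) :
    ((∀ i, |dstar i| ≤ δ) ∧ ∀ j, b j + (fun i => G i j) ⬝ᵥ dstar ≤ u) ∧
    (∀ (d : Fin n → ℝ) (z : ℝ), (∀ i, |d i| ≤ δ) →
      (∀ j, b j + (fun i => G i j) ⬝ᵥ d ≤ z) →
      u + (1 / 2) * (dstar ⬝ᵥ dstar) ≤ z + (1 / 2) * (d ⬝ᵥ d)) ∧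
    (∀ (d : Fin n → ℝ) (z : ℝ), (∀ i, |d i| ≤ δ) →
      (∀ j, b j + (fun i => G i j) ⬝ᵥ d ≤ z) →
      (∀ (d' : Fin n → ℝ) (z' : ℝ), (∀ i, |d' i| ≤ δ) →
        (∀ j, b j + (fun i => G i j) ⬝ᵥ d' ≤ z') →
        z + (1 / 2) * (d ⬝ᵥ d) ≤ z' + (1 / 2) * (d' ⬝ᵥ d')) →
      d = dstar ∧ z = u) := by
  set y := G *ᵥ ωstar with hy
  -- σ - ρ = -(d* + y)
  have hσρ : ∀ i, σstar i - ρstar i = -(dstar i + y i) := by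
    intro i
    rw [hσ, hρ]
    dsimp only
    rcases le_total (dstar i + y i) 0 with h | h
    · rw [max_eq_left (by linarith), max_eq_right h]; ring
    · rw [max_eq_right (by linarith), max_eq_left h]; ring
  have hbj : ∀ j, b j = u - vω j - ∑ i, G i j * dstar i := by
    intro j
    have hvec : (G *ᵥ ωstar + σstar - ρstar) = fun i => -(dstar i) := by
      funext i
      have := hσρ i
      simp only [Pi.add_apply, Pi.sub_apply, ← hy]
      linarith
    rw [← hy] at hvec
    rw [hb]
    simp only [Pi.add_apply, Pi.sub_apply, hvec, Matrix.mulVec, dotProduct,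
      Matrix.transpose_apply, mul_neg, Finset.sum_neg_distrib]
    ring
  -- feasibility of (d*, u)
  have hfeas : ∀ j, b j + (fun i => G i j) ⬝ᵥ dstar ≤ u := by
    intro j
    rw [hbj]
    simp only [dotProduct]
    linarith [hv0 j]
  -- swap lemma
  have hswap : ∀ w : Fin n → ℝ, ∑ j, ωstar j * ∑ i, G i j * w i = ∑ i, y i * w i := by
    intro w
    simp_rw [Finset.mul_sum]
    rw [Finset.sum_comm]
    refine Finset.sum_congr rfl fun i _ => ?_
    rw [hy]
    simp only [Matrix.mulVec, dotProduct, Finset.sum_mul]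
    refine Finset.sum_congr rfl fun j _ => by ring
  -- key lower bound from aggregated constraint
  have keyA : ∀ (d : Fin n → ℝ) (z : ℝ), (∀ j, b j + (fun i => G i j) ⬝ᵥ d ≤ z) →
      u + ∑ i, y i * (d i - dstar i) ≤ z := by
    intro d z hz
    have h1 : ∑ j, ωstar j * (b j + ∑ i, G i j * d i) ≤ ∑ j, ωstar j * z := by
      refine Finset.sum_le_sum fun j _ => mul_le_mul_of_nonneg_left ?_ (hω0 j)
      simpa [dotProduct] using hz j
    have h2 : ∑ j, ωstar j * z = z := by rw [← Finset.sum_mul, hω1, one_mul]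
    have h3 : ∑ j, ωstar j * (b j + ∑ i, G i j * d i)
        = u + ∑ i, y i * (d i - dstar i) := by
      have e1 : ∀ j, ωstar j * (b j + ∑ i, G i j * d i)
          = ωstar j * u - ωstar j * vω j + ωstar j * ∑ i, G i j * (d i - dstar i) := by
        intro j
        rw [hbj]
        have : ∑ i, G i j * (d i - dstar i) = ∑ i, G i j * d i - ∑ i, G i j * dstar i := by
          rw [← Finset.sum_sub_distrib]
          exact Finset.sum_congr rfl fun i _ => by ring
        rw [this]; ring
      calc ∑ j, ωstar j * (b j + ∑ i, G i j * d i)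
          = ∑ j, (ωstar j * u - ωstar j * vω j + ωstar j * ∑ i, G i j * (d i - dstar i)) :=
            Finset.sum_congr rfl fun j _ => e1 j
        _ = (∑ j, ωstar j) * u - ∑ j, ωstar j * vω j
              + ∑ j, ωstar j * ∑ i, G i j * (d i - dstar i) := by
            rw [Finset.sum_add_distrib, Finset.sum_sub_distrib, Finset.sum_mul]
        _ = u + ∑ i, y i * (d i - dstar i) := by
            rw [hω1, hswap]
            simp [hcv]
    linarith [h3 ▸ h1, h2 ▸ h1]
  -- pointwise sign condition
  have hB : ∀ (i : Fin n) (d : Fin n → ℝ), |d i| ≤ δ →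
      0 ≤ (dstar i + y i) * (d i - dstar i) := by
    intro i d hd
    obtain ⟨hd1, hd2⟩ := abs_le.1 hd
    rcases lt_trichotomy (dstar i + y i) 0 with h | h | h
    · have hσi : 0 < σstar i := by
        rw [hσ]; exact lt_max_iff.2 (Or.inl (by linarith))
      have hδi := hcσ i hσi
      nlinarith
    · rw [h, zero_mul]
    · have hρi : 0 < ρstar i := by
        rw [hρ]; exact lt_max_iff.2 (Or.inl (by linarith))
      have hδi := hcρ i hρi
      nlinarith
  -- combined key inequality
  have key : ∀ (d : Fin n → ℝ) (z : ℝ), (∀ i, |d i| ≤ δ) →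
      (∀ j, b j + (fun i => G i j) ⬝ᵥ d ≤ z) →
      u + (1 / 2) * (dstar ⬝ᵥ dstar) + (1 / 2) * ∑ i, (d i - dstar i) ^ 2
        ≤ z + (1 / 2) * (d ⬝ᵥ d) := by
    intro d z hd hz
    have hA := keyA d z hz
    have hBsum : 0 ≤ ∑ i, (dstar i + y i) * (d i - dstar i) :=
      Finset.sum_nonneg fun i _ => hB i d (hd i)
    have hone : (1 / 2) * (d ⬝ᵥ d) - (1 / 2) * (dstar ⬝ᵥ dstar)
        - (1 / 2) * ∑ i, (d i - dstar i) ^ 2 + ∑ i, y i * (d i - dstar i)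
        = ∑ i, (dstar i + y i) * (d i - dstar i) := by
      simp only [dotProduct, Finset.mul_sum, ← Finset.sum_sub_distrib,
        ← Finset.sum_add_distrib]
      exact Finset.sum_congr rfl fun i _ => by ring
    linarith
  refine ⟨⟨hdstar, hfeas⟩, ?_, ?_⟩
  · intro d z hd hz
    have h1 := key d z hd hz
    have h2 : (0 : ℝ) ≤ ∑ i, (d i - dstar i) ^ 2 :=
      Finset.sum_nonneg fun i _ => sq_nonneg _
    linarith
  · intro d z hd hz hopt
    have h1 := hopt dstar u hdstar hfeas
    have h2 := key d z hd hz
    have hS : ∑ i, (d i - dstar i) ^ 2 ≤ 0 := by linarith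
    have hSnn : (0 : ℝ) ≤ ∑ i, (d i - dstar i) ^ 2 :=
      Finset.sum_nonneg fun i _ => sq_nonneg _
    have hzero := (Finset.sum_eq_zero_iff_of_nonneg (fun i _ => sq_nonneg (d i - dstar i))).1
      (le_antisymm hS hSnn)
    have hdd : d = dstar := by
      funext i
      have := hzero i (Finset.mem_univ i)
      have := pow_eq_zero_iff (n := 2) (by norm_num) |>.1 this
      linarith [sub_eq_zero.1 this]
    subst hdd
    refine ⟨rfl, le_antisymm (by linarith) ?_⟩
    have h3 := keyA d z hz
    have : ∑ i, y i * (d i - d i) = 0 := by simp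
    linarith
end

section
/- The restricted subproblem solve suffices when the trust region is inactive: suppose ω̃ ∈ ℝ^m minimizes (1/2)ωᵀGᵀWGω − bᵀω over the simplex {ω ∈ ℝ^m : 𝟙ᵀω = 1, ω ≥ 0}. If ‖WGω̃‖_∞ ≤ δ, then (ω̃, 0) is an optimal solution of the dual subproblem. -/
open Matrix

/-- the restricted subproblem solve suffices when the trust region is
inactive: if `ω̃` minimizes `(1/2)ωᵀGᵀWGω − bᵀω` over the simplex and
`‖WGω̃‖_∞ ≤ δ`, then `(ω̃, 0)` is an optimal solution of the dual subproblem. -/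
theorem stmt18 (n m : ℕ) [NeZero n] [NeZero m]
    (G : Matrix (Fin n) (Fin m) ℝ) (b : Fin m → ℝ)
    (W : Matrix (Fin n) (Fin n) ℝ) (hW : W.PosDef) (δ : ℝ) (hδ : 0 < δ)
    (ωt : Fin m → ℝ) (hfeas : dualFeas m ωt)
    (hopt : ∀ ω : Fin m → ℝ, dualFeas m ω →
      (1 / 2) * (ωt ⬝ᵥ (Gᵀ * W * G) *ᵥ ωt) - b ⬝ᵥ ωt
        ≤ (1 / 2) * (ω ⬝ᵥ (Gᵀ * W * G) *ᵥ ω) - b ⬝ᵥ ω)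
    (hin : ∀ i, |(W *ᵥ G *ᵥ ωt) i| ≤ δ) :
    dualFeas m ωt ∧
    ∀ (ω : Fin m → ℝ) (γ : Fin n → ℝ), dualFeas m ω →
      dualObj n m G b W δ ω γ ≤ dualObj n m G b W δ ωt 0 := by
  obtain ⟨hsum, hpos⟩ := hfeas
  refine ⟨⟨hsum, hpos⟩, ?_⟩
  intro ω γ hω
  obtain ⟨hsumω, hposω⟩ := hω
  have hWsym : Wᵀ = W := by
    ext i j; have := congrFun (congrFun hW.isHermitian i) j; simpa using this
  have hpsd : ∀ x : Fin n → ℝ, 0 ≤ x ⬝ᵥ W *ᵥ x := fun x => by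
    simpa using hW.posSemidef.dotProduct_mulVec_nonneg x
  have hWs : ∀ x y : Fin n → ℝ, x ⬝ᵥ W *ᵥ y = (W *ᵥ x) ⬝ᵥ y := fun x y => by
    rw [Matrix.dotProduct_mulVec, ← Matrix.mulVec_transpose, hWsym]
  have hWc : ∀ x y : Fin n → ℝ, x ⬝ᵥ W *ᵥ y = y ⬝ᵥ W *ᵥ x := fun x y => by
    rw [hWs, dotProduct_comm]
  have hq : ∀ x y : Fin m → ℝ, x ⬝ᵥ (Gᵀ * W * G) *ᵥ y = (G *ᵥ x) ⬝ᵥ W *ᵥ (G *ᵥ y) :=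
    fun x y => by
      rw [← Matrix.mulVec_mulVec, ← Matrix.mulVec_mulVec, Matrix.dotProduct_mulVec,
        Matrix.vecMul_transpose]
  set v : Fin n → ℝ := W *ᵥ G *ᵥ ωt with hv
  set d : Fin m → ℝ := ω - ωt with hd
  have key3 : ∀ (a e : Fin n → ℝ) (t : ℝ),
      (a + t • e) ⬝ᵥ W *ᵥ (a + t • e)
        = a ⬝ᵥ W *ᵥ a + 2 * t * ((W *ᵥ a) ⬝ᵥ e) + t ^ 2 * (e ⬝ᵥ W *ᵥ e) := by
    intro a e t
    have h1 : a ⬝ᵥ W *ᵥ e = (W *ᵥ a) ⬝ᵥ e := hWs a e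
    have h2 : e ⬝ᵥ W *ᵥ a = (W *ᵥ a) ⬝ᵥ e := by rw [hWc, h1]
    simp only [Matrix.mulVec_add, dotProduct_add, add_dotProduct,
      Matrix.mulVec_smul, dotProduct_smul, smul_dotProduct, smul_eq_mul, h1, h2]
    ring
  -- abbreviations for the relevant scalars
  have hGd : G *ᵥ d = G *ᵥ ω - G *ᵥ ωt := by rw [hd, Matrix.mulVec_sub]
  -- first-order optimality condition
  have hfoc : 0 ≤ v ⬝ᵥ (G *ᵥ d) - b ⬝ᵥ d := by
    set q : ℝ := (G *ᵥ d) ⬝ᵥ W *ᵥ (G *ᵥ d) with hqd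
    have hq0 : 0 ≤ q := hpsd _
    have key : ∀ t : ℝ, 0 < t → t ≤ 1 →
        -(t / 2) * q ≤ v ⬝ᵥ (G *ᵥ d) - b ⬝ᵥ d := by
      intro t ht ht1
      have hfeas' : dualFeas m (ωt + t • d) := by
        constructor
        · have : ∑ j, (ωt j + t * (ω j - ωt j))
              = ∑ j, ωt j + t * (∑ j, ω j - ∑ j, ωt j) := by
            rw [Finset.sum_add_distrib, ← Finset.mul_sum, Finset.sum_sub_distrib]
          have h4 : ∑ j, (ωt j + t * (ω j - ωt j)) = 1 := by
            rw [this, hsum, hsumω]; ring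
          simpa [hd, smul_eq_mul] using h4
        · intro j
          have h1 := hpos j
          have h2 := hposω j
          have h3 : (0:ℝ) ≤ 1 - t := by linarith
          have : ωt j + t • (d j) = (1 - t) * ωt j + t * ω j := by
            simp [hd, smul_eq_mul]; ring
          simp only [Pi.add_apply, Pi.smul_apply]
          rw [this]
          have := mul_nonneg h3 h1
          have := mul_nonneg ht.le h2
          linarith
      have h := hopt _ hfeas'
      rw [hq, hq, Matrix.mulVec_add, Matrix.mulVec_smul, key3] at h
      have hb : b ⬝ᵥ (ωt + t • d) = b ⬝ᵥ ωt + t * (b ⬝ᵥ d) := by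
        simp [dotProduct_add, dotProduct_smul, smul_eq_mul]
      rw [hb] at h
      -- h : ½ X̃ - b·ωt ≤ ½ (X̃ + 2t v·Gd + t² q) - (b·ωt + t b·d)
      have h' : 0 ≤ t * (v ⬝ᵥ (G *ᵥ d) - b ⬝ᵥ d + (t / 2) * q) := by
        rw [← hv] at h
        nlinarith [h]
      have := (mul_nonneg_iff_of_pos_left ht).mp h'
      linarith
    by_contra hr
    push_neg at hr
    rcases hq0.eq_or_lt with hq' | hq'
    · have := key 1 one_pos le_rfl
      rw [← hq'] at this
      linarith
    · set t : ℝ := min 1 (-(v ⬝ᵥ (G *ᵥ d) - b ⬝ᵥ d) / q) with htdef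
      have hrpos : 0 < -(v ⬝ᵥ (G *ᵥ d) - b ⬝ᵥ d) := by linarith
      have ht : 0 < t := lt_min one_pos (div_pos hrpos hq')
      have hk := key t ht (min_le_left _ _)
      have htq : t * q ≤ -(v ⬝ᵥ (G *ᵥ d) - b ⬝ᵥ d) := by
        have h1 : t ≤ -(v ⬝ᵥ (G *ᵥ d) - b ⬝ᵥ d) / q := min_le_right _ _
        calc t * q ≤ (-(v ⬝ᵥ (G *ᵥ d) - b ⬝ᵥ d) / q) * q :=
              mul_le_mul_of_nonneg_right h1 hq0
          _ = -(v ⬝ᵥ (G *ᵥ d) - b ⬝ᵥ d) := by field_simp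
      linarith
  -- convexity inequality
  have key2 : ((G *ᵥ ω + γ) - G *ᵥ ωt) ⬝ᵥ W *ᵥ ((G *ᵥ ω + γ) - G *ᵥ ωt)
      = (G *ᵥ ω + γ) ⬝ᵥ W *ᵥ (G *ᵥ ω + γ) - 2 * (v ⬝ᵥ (G *ᵥ ω + γ))
        + v ⬝ᵥ (G *ᵥ ωt) := by
    have h1 : (G *ᵥ ω + γ) ⬝ᵥ W *ᵥ (G *ᵥ ωt) = v ⬝ᵥ (G *ᵥ ω + γ) := by
      rw [hWc, hWs, hv]
    have h2 : (G *ᵥ ωt) ⬝ᵥ W *ᵥ (G *ᵥ ω + γ) = v ⬝ᵥ (G *ᵥ ω + γ) := by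
      rw [hWs, hv]
    have h3 : (G *ᵥ ωt) ⬝ᵥ W *ᵥ (G *ᵥ ωt) = v ⬝ᵥ (G *ᵥ ωt) := by
      rw [hWs, hv]
    simp only [Matrix.mulVec_sub, dotProduct_sub, sub_dotProduct, h1, h2, h3]
    ring
  have hconv : 0 ≤ (G *ᵥ ω + γ) ⬝ᵥ W *ᵥ (G *ᵥ ω + γ) - 2 * (v ⬝ᵥ (G *ᵥ ω + γ))
      + v ⬝ᵥ (G *ᵥ ωt) := by
    rw [← key2]; exact hpsd _
  -- bound on the γ term
  have hγ : -(δ * ∑ i, |γ i|) ≤ v ⬝ᵥ γ := by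
    have h1 : ∀ i ∈ Finset.univ, -(δ * |γ i|) ≤ v i * γ i := by
      intro i _
      have h2 : |v i * γ i| ≤ δ * |γ i| := by
        rw [abs_mul]
        exact mul_le_mul_of_nonneg_right (hin i) (abs_nonneg _)
      have := neg_abs_le (v i * γ i)
      linarith
    calc -(δ * ∑ i, |γ i|) = ∑ i, -(δ * |γ i|) := by
          rw [Finset.mul_sum, ← Finset.sum_neg_distrib]
      _ ≤ ∑ i, v i * γ i := Finset.sum_le_sum h1
      _ = v ⬝ᵥ γ := rfl
  -- assemble
  have hvx : v ⬝ᵥ (G *ᵥ ω + γ) = v ⬝ᵥ (G *ᵥ ω) + v ⬝ᵥ γ := dotProduct_add v _ _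
  have hvd : v ⬝ᵥ (G *ᵥ d) = v ⬝ᵥ (G *ᵥ ω) - v ⬝ᵥ (G *ᵥ ωt) := by
    rw [hGd, dotProduct_sub]
  have hbd : b ⬝ᵥ d = b ⬝ᵥ ω - b ⬝ᵥ ωt := by rw [hd, dotProduct_sub]
  have hR : (G *ᵥ ωt + 0) ⬝ᵥ W *ᵥ (G *ᵥ ωt + 0) = v ⬝ᵥ (G *ᵥ ωt) := by
    rw [add_zero, hWs, hv]
  unfold dualObj
  rw [hR]
  simp only [Pi.zero_apply, abs_zero, Finset.sum_const_zero, mul_zero, sub_zero]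
  rw [hvx] at hconv
  rw [hvd, hbd] at hfoc
  linarith
end
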